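/- Let G=(V,E) be a finite simple undirected graph with β_e > 1 for all e ∈ E and 0 < λ_v ≤ 1 for all v ∈ V, and let the weighted random cluster model have edge parameters q_e = 1 − 1/β_e and vertex weights λ. Then for every S ⊆ E, Σ_{σ∈{0,1}^V} π_Ising(σ) · P_{I→R}(σ, S) = π_wrc(S), and for every σ ∈ {0,1}^V, Σ_{S⊆E} π_wrc(S) · P_{R→I}(S, σ) = π_Ising(σ). That is, π_Ising P_{I→R} = π_wrc and π_wrc P_{R→I} = π_Ising. -/

import Mathlib

open Finset
open scoped Classical

noncomputable section

variable {V : Type*} [Fintype V] [DecidableEq V]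

/-- The vertex set of the connected component of `v` in the graph `(V, S)`. -/
def compOf (S : Finset (Sym2 V)) (v : V) : Finset V :=
  Finset.univ.filter fun u => (SimpleGraph.fromEdgeSet (↑S : Set (Sym2 V))).Reachable v u

/-- `κ(V,S)`: the set of vertex sets of connected components of the graph `(V, S)`. -/
def kappa (S : Finset (Sym2 V)) : Finset (Finset V) :=
  Finset.univ.image (compOf S)

/-- `∏_{C ∈ κ(V,S)} (1 + ∏_{u ∈ C} λ_u)`. -/
def clusterProd (S : Finset (Sym2 V)) (lam : V → ℝ) : ℝ :=
  ∏ C ∈ kappa S, (1 + ∏ u ∈ C, lam u)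

/-- Weight of an edge subset `S ⊆ E₀` in the weighted random cluster model. -/
def wtWRC (E₀ : Finset (Sym2 V)) (q : Sym2 V → ℝ) (lam : V → ℝ) (S : Finset (Sym2 V)) : ℝ :=
  (∏ e ∈ S, q e) * (∏ f ∈ E₀ \ S, (1 - q f)) * clusterProd S lam

/-- Partition function of the weighted random cluster model. -/
def ZWRC (E₀ : Finset (Sym2 V)) (q : Sym2 V → ℝ) (lam : V → ℝ) : ℝ :=
  ∑ S ∈ E₀.powerset, wtWRC E₀ q lam S

/-- The weighted random cluster distribution. -/
def piWRC (E₀ : Finset (Sym2 V)) (q : Sym2 V → ℝ) (lam : V → ℝ) (S : Finset (Sym2 V)) : ℝ :=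
  wtWRC E₀ q lam S / ZWRC E₀ q lam

/-- The monochromatic edges of a spin configuration `σ`. -/
def monoEdges (E₀ : Finset (Sym2 V)) (σ : V → Bool) : Finset (Sym2 V) :=
  E₀.filter fun e => (e.map σ).IsDiag

/-- Weight of a spin configuration in the Ising model. -/
def wtIsing (E₀ : Finset (Sym2 V)) (β : Sym2 V → ℝ) (lam : V → ℝ) (σ : V → Bool) : ℝ :=
  (∏ e ∈ monoEdges E₀ σ, β e) * ∏ v : V, (if σ v then lam v else 1)

/-- Ising partition function. -/
def ZIsing (E₀ : Finset (Sym2 V)) (β : Sym2 V → ℝ) (lam : V → ℝ) : ℝ :=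
  ∑ σ : V → Bool, wtIsing E₀ β lam σ

/-- Ising Gibbs distribution. -/
def piIsing (E₀ : Finset (Sym2 V)) (β : Sym2 V → ℝ) (lam : V → ℝ) (σ : V → Bool) : ℝ :=
  wtIsing E₀ β lam σ / ZIsing E₀ β lam

/-- Vertices of odd degree in the graph `(V, S)`. -/
def oddVerts (S : Finset (Sym2 V)) : Finset V :=
  Finset.univ.filter fun v => Odd (S.filter fun e => v ∈ e).card

/-- Weight of an edge subset in the subgraph-world model. -/
def wtSG (E₀ : Finset (Sym2 V)) (p : Sym2 V → ℝ) (η : V → ℝ) (S : Finset (Sym2 V)) : ℝ :=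
  (∏ e ∈ S, p e) * (∏ f ∈ E₀ \ S, (1 - p f)) * ∏ v ∈ oddVerts S, η v

/-- Subgraph-world partition function. -/
def ZSG (E₀ : Finset (Sym2 V)) (p : Sym2 V → ℝ) (η : V → ℝ) : ℝ :=
  ∑ S ∈ E₀.powerset, wtSG E₀ p η S

/-- Subgraph-world distribution. -/
def piSG (E₀ : Finset (Sym2 V)) (p : Sym2 V → ℝ) (η : V → ℝ) (S : Finset (Sym2 V)) : ℝ :=
  wtSG E₀ p η S / ZSG E₀ p η

/-- The transformation `P_{I→R}` from Ising configurations to edge subsets. -/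
def PIR (E₀ : Finset (Sym2 V)) (β : Sym2 V → ℝ) (σ : V → Bool) (S : Finset (Sym2 V)) : ℝ :=
  if S ⊆ monoEdges E₀ σ then
    (∏ e ∈ S, (1 - (β e)⁻¹)) * ∏ f ∈ monoEdges E₀ σ \ S, (β f)⁻¹
  else 0

/-- The transformation `P_{R→I}` from edge subsets to Ising configurations. -/
def PRI (E₀ : Finset (Sym2 V)) (lam : V → ℝ) (S : Finset (Sym2 V)) (σ : V → Bool) : ℝ :=
  if S ⊆ monoEdges E₀ σ then
    ∏ C ∈ kappa S, ((∏ v ∈ C, if σ v then lam v else 1) / (1 + ∏ v ∈ C, lam v))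
  else 0

/-- Swendsen-Wang dynamics for the Ising model: `P_{I→R} ⬝ P_{R→I}`. -/
def PSWIsing (E₀ : Finset (Sym2 V)) (β : Sym2 V → ℝ) (lam : V → ℝ) (σ τ : V → Bool) : ℝ :=
  ∑ S ∈ E₀.powerset, PIR E₀ β σ S * PRI E₀ lam S τ

/-- Swendsen-Wang dynamics for the weighted random cluster model: `P_{R→I} ⬝ P_{I→R}`. -/
def PSWwrc (E₀ : Finset (Sym2 V)) (β : Sym2 V → ℝ) (lam : V → ℝ)
    (S S' : Finset (Sym2 V)) : ℝ :=
  ∑ σ : V → Bool, PRI E₀ lam S σ * PIR E₀ β σ S'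

/-- Lazy edge-flipping (Metropolis) dynamics for a distribution `pi` on subsets of `E₀`. -/
def PEF (E₀ : Finset (Sym2 V)) (pi : Finset (Sym2 V) → ℝ) (x y : Finset (Sym2 V)) : ℝ :=
  if x = y then
    1 - (1 / (2 * (E₀.card : ℝ))) * ∑ e ∈ E₀, min 1 (pi (symmDiff x {e}) / pi x)
  else if (symmDiff x y).card = 1 then
    (1 / (2 * (E₀.card : ℝ))) * min 1 (pi y / pi x)
  else 0

/-- Variance of `f` with respect to a distribution `pi` supported on `states`. -/
def varOn {α : Type*} (states : Finset α) (pi f : α → ℝ) : ℝ :=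
  (∑ x ∈ states, pi x * f x ^ 2) - (∑ x ∈ states, pi x * f x) ^ 2

/-- Dirichlet form of a Markov kernel `P` with stationary distribution `pi` on `states`. -/
def dirichletOn {α : Type*} (states : Finset α) (pi : α → ℝ) (P : α → α → ℝ) (f : α → ℝ) : ℝ :=
  ∑ x ∈ states, pi x * f x * (f x - ∑ y ∈ states, P x y * f y)

/-- Spectral gap of a reversible Markov kernel `P` with stationary distribution `pi`. -/
def gapOn {α : Type*} (states : Finset α) (pi : α → ℝ) (P : α → α → ℝ) : ℝ :=
  sInf ((fun f : α → ℝ => dirichletOn states pi P f / varOn states pi f) ''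
    {f | varOn states pi f ≠ 0})

/-- Total variation distance between two distributions on `states`. -/
def dTV {α : Type*} (states : Finset α) (μ ν : α → ℝ) : ℝ :=
  (1 / 2) * ∑ z ∈ states, |μ z - ν z|

/-- `t`-step transition probabilities of the Markov kernel `P` on state space `states`. -/
def kpow {α : Type*} (states : Finset α) (P : α → α → ℝ) : ℕ → α → α → ℝ
  | 0 => fun x y => if x = y then 1 else 0
  | (t + 1) => fun x y => ∑ z ∈ states, P x z * kpow states P t z y



section SWAux

variable {V : Type*} [Fintype V] [DecidableEq V]

lemma mem_compOf {S : Finset (Sym2 V)} {v u : V} :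
    u ∈ compOf S v ↔ (SimpleGraph.fromEdgeSet (↑S : Set (Sym2 V))).Reachable v u := by
  simp [compOf]

lemma mem_compOf_self (S : Finset (Sym2 V)) (v : V) : v ∈ compOf S v :=
  mem_compOf.2 (SimpleGraph.Reachable.refl v)

lemma compOf_eq_of_mem {S : Finset (Sym2 V)} {u v : V} (h : u ∈ compOf S v) :
    compOf S u = compOf S v := by
  ext w
  simp only [mem_compOf] at h ⊢
  exact ⟨fun hw => h.trans hw, fun hw => h.symm.trans hw⟩

lemma compOf_mem_kappa (S : Finset (Sym2 V)) (v : V) : compOf S v ∈ kappa S :=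
  Finset.mem_image.mpr ⟨v, Finset.mem_univ v, rfl⟩

lemma kappa_prod (S : Finset (Sym2 V)) (g : V → ℝ) :
    ∏ C ∈ kappa S, ∏ v ∈ C, g v = ∏ v : V, g v := by
  have hdisj : (↑(kappa S) : Set (Finset V)).PairwiseDisjoint id := by
    intro C hC D hD hne
    simp only [Finset.mem_coe] at hC hD
    obtain ⟨u, -, rfl⟩ := Finset.mem_image.mp hC
    obtain ⟨v, -, rfl⟩ := Finset.mem_image.mp hD
    refine Finset.disjoint_left.mpr fun w hwC hwD => hne ?_
    simp only [id_eq] at hwC hwD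
    rw [← compOf_eq_of_mem hwC, compOf_eq_of_mem hwD]
  have hcover : (kappa S).biUnion id = Finset.univ := by
    apply Finset.eq_univ_of_forall
    intro v
    exact Finset.mem_biUnion.mpr ⟨compOf S v, compOf_mem_kappa S v, mem_compOf_self S v⟩
  calc ∏ C ∈ kappa S, ∏ v ∈ C, g v = ∏ v ∈ (kappa S).biUnion id, g v :=
        (Finset.prod_biUnion hdisj).symm
    _ = ∏ v : V, g v := by rw [hcover]

lemma sigma_const {E₀ S : Finset (Sym2 V)} {σ : V → Bool}
    (hS : S ⊆ monoEdges E₀ σ) {u v : V}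
    (h : (SimpleGraph.fromEdgeSet (↑S : Set (Sym2 V))).Reachable u v) : σ u = σ v := by
  obtain ⟨w⟩ := h
  induction w with
  | nil => rfl
  | cons hadj p ih =>
    rename_i a b c
    have hab : s(a, b) ∈ S := by
      have := (SimpleGraph.fromEdgeSet_adj _ |>.mp hadj).1
      simpa using this
    have hmem := hS hab
    rw [monoEdges, Finset.mem_filter] at hmem
    have hdiag := hmem.2
    rw [Sym2.map_pair_eq, Sym2.mk_isDiag_iff] at hdiag
    exact hdiag.trans ih

lemma key_eq (E₀ : Finset (Sym2 V)) (β : Sym2 V → ℝ) (lam : V → ℝ)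
    (hβ : ∀ e ∈ E₀, 1 < β e) (hlam : ∀ v, 0 < lam v)
    (σ : V → Bool) (S : Finset (Sym2 V)) :
    wtIsing E₀ β lam σ * PIR E₀ β σ S =
      (∏ e ∈ E₀, β e) * (wtWRC E₀ (fun e => 1 - (β e)⁻¹) lam S * PRI E₀ lam S σ) := by
  by_cases hSM : S ⊆ monoEdges E₀ σ
  · have hME : monoEdges E₀ σ ⊆ E₀ := Finset.filter_subset _ _
    have hβne : ∀ e ∈ E₀, β e ≠ 0 := fun e he => ne_of_gt (zero_lt_one.trans (hβ e he))
    have hcl : clusterProd S lam *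
        ∏ C ∈ kappa S, ((∏ v ∈ C, if σ v then lam v else 1) / (1 + ∏ v ∈ C, lam v)) =
        ∏ v : V, (if σ v then lam v else 1) := by
      rw [clusterProd, ← Finset.prod_mul_distrib, ← kappa_prod S (fun v => if σ v then lam v else 1)]
      refine Finset.prod_congr rfl fun C _ => ?_
      have hpos : (0:ℝ) < 1 + ∏ v ∈ C, lam v :=
        add_pos one_pos (Finset.prod_pos fun v _ => hlam v)
      rw [mul_comm, div_mul_cancel₀ _ (ne_of_gt hpos)]
    have hU : (monoEdges E₀ σ \ S) ∪ (E₀ \ monoEdges E₀ σ) = E₀ \ S := by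
      ext e
      simp only [Finset.mem_union, Finset.mem_sdiff]
      have h1 : e ∈ S → e ∈ monoEdges E₀ σ := @hSM e
      have h2 : e ∈ monoEdges E₀ σ → e ∈ E₀ := @hME e
      tauto
    have hdisjU : Disjoint (monoEdges E₀ σ \ S) (E₀ \ monoEdges E₀ σ) :=
      Finset.disjoint_left.mpr fun e he₁ he₂ =>
        (Finset.mem_sdiff.mp he₂).2 (Finset.mem_sdiff.mp he₁).1
    have hQ : ∏ f ∈ E₀ \ S, (β f)⁻¹ =
        (∏ f ∈ monoEdges E₀ σ \ S, (β f)⁻¹) * ∏ f ∈ E₀ \ monoEdges E₀ σ, (β f)⁻¹ := by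
      rw [← Finset.prod_union hdisjU, hU]
    have hB : (∏ e ∈ E₀ \ monoEdges E₀ σ, β e) * ∏ e ∈ monoEdges E₀ σ, β e = ∏ e ∈ E₀, β e :=
      Finset.prod_sdiff hME
    have hDD : (∏ f ∈ E₀ \ monoEdges E₀ σ, β f) * ∏ f ∈ E₀ \ monoEdges E₀ σ, (β f)⁻¹ = 1 := by
      rw [← Finset.prod_mul_distrib]
      exact Finset.prod_eq_one fun f hf =>
        mul_inv_cancel₀ (hβne f (Finset.mem_sdiff.mp hf).1)
    rw [wtIsing, PIR, if_pos hSM, wtWRC, PRI, if_pos hSM]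
    simp only [sub_sub_cancel]
    rw [hQ, ← hB, ← hcl]
    linear_combination (-((∏ e ∈ monoEdges E₀ σ, β e) * clusterProd S lam *
      (∏ C ∈ kappa S, ((∏ v ∈ C, if σ v then lam v else 1) / (1 + ∏ v ∈ C, lam v))) *
      (∏ x ∈ S, (1 - (β x)⁻¹)) * ∏ f ∈ monoEdges E₀ σ \ S, (β f)⁻¹)) * hDD
  · simp [PIR, PRI, hSM]

lemma rowPIR (E₀ : Finset (Sym2 V)) (β : Sym2 V → ℝ) (σ : V → Bool) :
    ∑ S ∈ E₀.powerset, PIR E₀ β σ S = 1 := by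
  have hME : monoEdges E₀ σ ⊆ E₀ := Finset.filter_subset _ _
  rw [← Finset.sum_subset (Finset.powerset_mono.mpr hME)
      (fun S _ hS' => by rw [PIR, if_neg (fun h => hS' (Finset.mem_powerset.mpr h))])]
  have : ∑ S ∈ (monoEdges E₀ σ).powerset, PIR E₀ β σ S =
      ∑ S ∈ (monoEdges E₀ σ).powerset,
        (∏ e ∈ S, (1 - (β e)⁻¹)) * ∏ f ∈ monoEdges E₀ σ \ S, (β f)⁻¹ :=
    Finset.sum_congr rfl fun S hS => by rw [PIR, if_pos (Finset.mem_powerset.mp hS)]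
  rw [this, ← Finset.prod_add]
  simp

lemma rowPRI (E₀ : Finset (Sym2 V)) (lam : V → ℝ) (hlam : ∀ v, 0 < lam v)
    (S : Finset (Sym2 V)) (hSE : S ⊆ E₀) :
    ∑ σ : V → Bool, PRI E₀ lam S σ = 1 := by
  classical
  have hcompC : ∀ C ∈ kappa S, ∀ v ∈ C, compOf S v = C := by
    intro C hC v hv
    obtain ⟨u, -, rfl⟩ := Finset.mem_image.mp hC
    exact compOf_eq_of_mem hv
  set ts : ({C // C ∈ kappa S} → Bool) → (V → Bool) :=
    fun c v => c ⟨compOf S v, compOf_mem_kappa S v⟩ with hts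
  have hts_const : ∀ c (v : V) (C : Finset V) (hC : C ∈ kappa S), v ∈ C →
      ts c v = c ⟨C, hC⟩ := by
    intro c v C hC hv
    simp only [hts]
    congr 1
    exact Subtype.ext (hcompC C hC v hv)
  have hts_mono : ∀ c, S ⊆ monoEdges E₀ (ts c) := by
    intro c e he
    rw [monoEdges, Finset.mem_filter]
    refine ⟨hSE he, ?_⟩
    revert he
    induction e using Sym2.ind with
    | _ a b =>
      intro he
      rw [Sym2.map_pair_eq, Sym2.mk_isDiag_iff]
      by_cases hab : a = b
      · rw [hab]
      · have hadj : (SimpleGraph.fromEdgeSet (↑S : Set (Sym2 V))).Adj a b :=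
          (SimpleGraph.fromEdgeSet_adj _).mpr ⟨by simpa using he, hab⟩
        have hmem : b ∈ compOf S a := mem_compOf.mpr hadj.reachable
        rw [hts_const c a (compOf S a) (compOf_mem_kappa S a) (mem_compOf_self S a),
            hts_const c b (compOf S a) (compOf_mem_kappa S a) hmem]
  -- restrict to configurations with S ⊆ monoEdges
  have hstep1 : ∑ σ : V → Bool, PRI E₀ lam S σ =
      ∑ σ ∈ Finset.univ.filter (fun σ : V → Bool => S ⊆ monoEdges E₀ σ),
        ∏ C ∈ kappa S, ((∏ v ∈ C, if σ v then lam v else 1) / (1 + ∏ v ∈ C, lam v)) := by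
    rw [Finset.sum_filter]
    exact Finset.sum_congr rfl fun σ _ => by rw [PRI]
  rw [hstep1]
  have hstep2 : ∑ σ ∈ Finset.univ.filter (fun σ : V → Bool => S ⊆ monoEdges E₀ σ),
        ∏ C ∈ kappa S, ((∏ v ∈ C, if σ v then lam v else 1) / (1 + ∏ v ∈ C, lam v)) =
      ∑ c : {C // C ∈ kappa S} → Bool,
        ∏ x ∈ (kappa S).attach,
          ((if c x then ∏ v ∈ (x : Finset V), lam v else 1) /
            (1 + ∏ v ∈ (x : Finset V), lam v)) := by
    have hrep : ∀ x : {C // C ∈ kappa S}, ∃ v : V, compOf S v = (x : Finset V) := by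
      intro x
      obtain ⟨v, -, hv⟩ := Finset.mem_image.mp x.2
      exact ⟨v, hv⟩
    set rep : {C // C ∈ kappa S} → V := fun x => (hrep x).choose with hrepdef
    have hrepspec : ∀ x : {C // C ∈ kappa S}, compOf S (rep x) = (x : Finset V) :=
      fun x => (hrep x).choose_spec
    have hrepmem : ∀ x : {C // C ∈ kappa S}, rep x ∈ (x : Finset V) := by
      intro x; rw [← hrepspec x]; exact mem_compOf_self S (rep x)
    refine (Finset.sum_bij' (fun c _ => ts c) (fun σ _ => fun x => σ (rep x))
      ?_ (fun σ _ => Finset.mem_univ _) ?_ ?_ ?_).symm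
    · intro c _
      exact Finset.mem_filter.mpr ⟨Finset.mem_univ _, hts_mono c⟩
    · intro c _
      funext x
      show ts c (rep x) = c x
      rw [hts_const c (rep x) (x : Finset V) x.2 (hrepmem x)]
    · intro σ hσ
      have hσ' : S ⊆ monoEdges E₀ σ := (Finset.mem_filter.mp hσ).2
      funext v
      show ts (fun x => σ (rep x)) v = σ v
      have h1 : ts (fun x => σ (rep x)) v = σ (rep ⟨compOf S v, compOf_mem_kappa S v⟩) := rfl
      rw [h1]
      have hr : (SimpleGraph.fromEdgeSet (↑S : Set (Sym2 V))).Reachable v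
          (rep ⟨compOf S v, compOf_mem_kappa S v⟩) :=
        mem_compOf.mp (hrepmem ⟨compOf S v, compOf_mem_kappa S v⟩)
      exact (sigma_const hσ' hr).symm
    · intro c _
      rw [← Finset.prod_attach (kappa S)
        (fun C => (∏ v ∈ C, if ts c v then lam v else 1) / (1 + ∏ v ∈ C, lam v))]
      refine Finset.prod_congr rfl fun x _ => ?_
      congr 1
      have hval : ∀ v ∈ (x : Finset V), (if ts c v then lam v else 1) =
          (if c x then lam v else 1) := by
        intro v hv
        rw [hts_const c v (x : Finset V) x.2 hv]
      rw [Finset.prod_congr rfl hval]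
      by_cases hc : c x <;> simp [hc]
  have hswap := Finset.prod_univ_sum (fun _ : {C // C ∈ kappa S} => (Finset.univ : Finset Bool))
    (fun x b => ((if b then ∏ v ∈ (x : Finset V), lam v else 1) /
      (1 + ∏ v ∈ (x : Finset V), lam v)))
  rw [Fintype.piFinset_univ] at hswap
  rw [hstep2, ← Finset.univ_eq_attach, ← hswap]
  refine Finset.prod_eq_one fun x _ => ?_
  have hpos : (0:ℝ) < 1 + ∏ v ∈ (x : Finset V), lam v :=
    add_pos one_pos (Finset.prod_pos fun v _ => hlam v)
  rw [show ∑ b ∈ (Finset.univ : Finset Bool),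
      ((if b then ∏ v ∈ (x : Finset V), lam v else 1) / (1 + ∏ v ∈ (x : Finset V), lam v)) =
      ((∏ v ∈ (x : Finset V), lam v) / (1 + ∏ v ∈ (x : Finset V), lam v)) +
        (1 / (1 + ∏ v ∈ (x : Finset V), lam v)) from by rw [Fintype.sum_bool]; simp]
  rw [← add_div, add_comm, div_self (ne_of_gt hpos)]

lemma Z_eq (E₀ : Finset (Sym2 V)) (β : Sym2 V → ℝ) (lam : V → ℝ)
    (hβ : ∀ e ∈ E₀, 1 < β e) (hlam : ∀ v, 0 < lam v) :
    ZIsing E₀ β lam = (∏ e ∈ E₀, β e) * ZWRC E₀ (fun e => 1 - (β e)⁻¹) lam := by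
  rw [ZIsing, ZWRC, Finset.mul_sum]
  calc ∑ σ : V → Bool, wtIsing E₀ β lam σ
      = ∑ σ : V → Bool, ∑ S ∈ E₀.powerset, wtIsing E₀ β lam σ * PIR E₀ β σ S := by
        refine Finset.sum_congr rfl fun σ _ => ?_
        rw [← Finset.mul_sum, rowPIR E₀ β σ, mul_one]
    _ = ∑ S ∈ E₀.powerset, ∑ σ : V → Bool, wtIsing E₀ β lam σ * PIR E₀ β σ S :=
        Finset.sum_comm
    _ = ∑ S ∈ E₀.powerset, (∏ e ∈ E₀, β e) * wtWRC E₀ (fun e => 1 - (β e)⁻¹) lam S := by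
        refine Finset.sum_congr rfl fun S hS => ?_
        calc ∑ σ : V → Bool, wtIsing E₀ β lam σ * PIR E₀ β σ S
            = ∑ σ : V → Bool,
                (∏ e ∈ E₀, β e) * (wtWRC E₀ (fun e => 1 - (β e)⁻¹) lam S * PRI E₀ lam S σ) :=
              Finset.sum_congr rfl fun σ _ => key_eq E₀ β lam hβ hlam σ S
          _ = (∏ e ∈ E₀, β e) * (wtWRC E₀ (fun e => 1 - (β e)⁻¹) lam S *
                ∑ σ : V → Bool, PRI E₀ lam S σ) := by
              rw [← Finset.mul_sum, ← Finset.mul_sum]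
          _ = (∏ e ∈ E₀, β e) * wtWRC E₀ (fun e => 1 - (β e)⁻¹) lam S := by
              rw [rowPRI E₀ lam hlam S (Finset.mem_powerset.mp hS), mul_one]

end SWAux


/-- Stationarity: `π_Ising P_{I→R} = π_wrc` and `π_wrc P_{R→I} = π_Ising`,
where the weighted random cluster model has `q_e = 1 − 1/β_e`. -/
theorem pir_pri_stationary {V : Type*} [Fintype V] [DecidableEq V]
    (G : SimpleGraph V) [DecidableRel G.Adj]
    (β : Sym2 V → ℝ) (lam : V → ℝ)
    (hβ : ∀ e ∈ G.edgeFinset, 1 < β e)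
    (hlam : ∀ v : V, 0 < lam v ∧ lam v ≤ 1) :
    (∀ S ∈ G.edgeFinset.powerset,
      (∑ σ : V → Bool, piIsing G.edgeFinset β lam σ * PIR G.edgeFinset β σ S) =
        piWRC G.edgeFinset (fun e => 1 - (β e)⁻¹) lam S) ∧
    (∀ σ : V → Bool,
      (∑ S ∈ G.edgeFinset.powerset,
        piWRC G.edgeFinset (fun e => 1 - (β e)⁻¹) lam S * PRI G.edgeFinset lam S σ) =
        piIsing G.edgeFinset β lam σ) := by
  set E₀ := G.edgeFinset with hE₀
  have hlam' : ∀ v, 0 < lam v := fun v => (hlam v).1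
  set B := ∏ e ∈ E₀, β e with hBdef
  have hBpos : 0 < B := Finset.prod_pos fun e he => zero_lt_one.trans (hβ e he)
  have hwt : ∀ σ : V → Bool, 0 < wtIsing E₀ β lam σ := by
    intro σ
    refine mul_pos (Finset.prod_pos fun e he =>
      zero_lt_one.trans (hβ e (Finset.filter_subset _ _ he)))
      (Finset.prod_pos fun v _ => ?_)
    by_cases h : σ v <;> simp [h, hlam' v]
  have hZI : 0 < ZIsing E₀ β lam :=
    Finset.sum_pos (fun σ _ => hwt σ) Finset.univ_nonempty
  have hZeq : ZIsing E₀ β lam = B * ZWRC E₀ (fun e => 1 - (β e)⁻¹) lam :=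
    Z_eq E₀ β lam hβ hlam'
  have hZW : ZWRC E₀ (fun e => 1 - (β e)⁻¹) lam ≠ 0 := by
    intro h
    rw [h, mul_zero] at hZeq
    exact (ne_of_gt hZI) hZeq
  constructor
  · intro S hS
    have hSE : S ⊆ E₀ := Finset.mem_powerset.mp hS
    have hsum : ∑ σ : V → Bool, wtIsing E₀ β lam σ * PIR E₀ β σ S =
        B * wtWRC E₀ (fun e => 1 - (β e)⁻¹) lam S := by
      calc ∑ σ : V → Bool, wtIsing E₀ β lam σ * PIR E₀ β σ S
          = ∑ σ : V → Bool,
              B * (wtWRC E₀ (fun e => 1 - (β e)⁻¹) lam S * PRI E₀ lam S σ) :=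
            Finset.sum_congr rfl fun σ _ => key_eq E₀ β lam hβ hlam' σ S
        _ = B * (wtWRC E₀ (fun e => 1 - (β e)⁻¹) lam S * ∑ σ : V → Bool, PRI E₀ lam S σ) := by
            rw [← Finset.mul_sum, ← Finset.mul_sum]
        _ = B * wtWRC E₀ (fun e => 1 - (β e)⁻¹) lam S := by
            rw [rowPRI E₀ lam hlam' S hSE, mul_one]
    calc ∑ σ : V → Bool, piIsing E₀ β lam σ * PIR E₀ β σ S
        = (∑ σ : V → Bool, wtIsing E₀ β lam σ * PIR E₀ β σ S) / ZIsing E₀ β lam := by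
          rw [Finset.sum_div]
          exact Finset.sum_congr rfl fun σ _ => by rw [piIsing, div_mul_eq_mul_div]
      _ = B * wtWRC E₀ (fun e => 1 - (β e)⁻¹) lam S /
            (B * ZWRC E₀ (fun e => 1 - (β e)⁻¹) lam) := by rw [hsum, hZeq]
      _ = piWRC E₀ (fun e => 1 - (β e)⁻¹) lam S := by
          rw [piWRC, mul_div_mul_left _ _ (ne_of_gt hBpos)]
  · intro σ
    have hsum : ∑ S ∈ E₀.powerset, wtWRC E₀ (fun e => 1 - (β e)⁻¹) lam S * PRI E₀ lam S σ =
        wtIsing E₀ β lam σ / B := by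
      have : ∀ S ∈ E₀.powerset,
          wtWRC E₀ (fun e => 1 - (β e)⁻¹) lam S * PRI E₀ lam S σ =
          wtIsing E₀ β lam σ * PIR E₀ β σ S / B := by
        intro S _
        rw [key_eq E₀ β lam hβ hlam' σ S, mul_div_cancel_left₀ _ (ne_of_gt hBpos)]
      rw [Finset.sum_congr rfl this, ← Finset.sum_div, ← Finset.mul_sum,
        rowPIR E₀ β σ, mul_one]
    calc ∑ S ∈ E₀.powerset, piWRC E₀ (fun e => 1 - (β e)⁻¹) lam S * PRI E₀ lam S σ
        = (∑ S ∈ E₀.powerset, wtWRC E₀ (fun e => 1 - (β e)⁻¹) lam S * PRI E₀ lam S σ) /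
            ZWRC E₀ (fun e => 1 - (β e)⁻¹) lam := by
          rw [Finset.sum_div]
          exact Finset.sum_congr rfl fun S _ => by rw [piWRC, div_mul_eq_mul_div]
      _ = wtIsing E₀ β lam σ / (B * ZWRC E₀ (fun e => 1 - (β e)⁻¹) lam) := by
          rw [hsum, div_div]
      _ = piIsing E₀ β lam σ := by rw [piIsing, hZeq]

end
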